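/- Let S be a compact topological space and B the open unit ball of C(S, ℂ) with the sup norm. For each a ∈ B, the map φ_a(f) = (f + a)/(1 + conj(a)·f) (pointwise operations) is a well-defined bijection of B onto itself with inverse φ_{-a}. -/

import Mathlib

open scoped ComplexConjugate

lemma mob_denom_ne {z w : ℂ} (hz : ‖z‖ < 1) (hw : ‖w‖ < 1) :
    1 + conj w * z ≠ 0 := by
  intro h
  have h1 : ‖conj w * z‖ < 1 := by
    rw [norm_mul, RCLike.norm_conj]
    nlinarith [norm_nonneg z, norm_nonneg w]
  have : conj w * z = -1 := by linear_combination h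
  rw [this] at h1
  simp at h1

lemma mob_normSq_diff (z w : ℂ) :
    Complex.normSq (1 + conj w * z) - Complex.normSq (z + w) =
      (1 - Complex.normSq z) * (1 - Complex.normSq w) := by
  simp [Complex.normSq_apply, Complex.add_re, Complex.add_im, Complex.mul_re,
    Complex.mul_im, Complex.conj_re, Complex.conj_im]
  ring

lemma normSq_lt_one {z : ℂ} (hz : ‖z‖ < 1) : Complex.normSq z < 1 := by
  rw [← Complex.sq_norm]
  nlinarith [norm_nonneg z]

lemma mob_norm_lt {z w : ℂ} (hz : ‖z‖ < 1) (hw : ‖w‖ < 1) :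
    ‖(z + w) / (1 + conj w * z)‖ < 1 := by
  have hne := mob_denom_ne hz hw
  have hpos : 0 < ‖1 + conj w * z‖ := norm_pos_iff.mpr hne
  rw [norm_div, div_lt_one hpos]
  have h1 := normSq_lt_one hz
  have h2 := normSq_lt_one hw
  have h3 := mob_normSq_diff z w
  have e1 : Complex.normSq (z + w) = ‖z + w‖ ^ 2 := by
    rw [← Complex.sq_norm]
  have e2 : Complex.normSq (1 + conj w * z) = ‖1 + conj w * z‖ ^ 2 := by
    rw [← Complex.sq_norm]
  nlinarith [norm_nonneg (z + w), hpos]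

lemma mob_inv {z w : ℂ} (hz : ‖z‖ < 1) (hw : ‖w‖ < 1) :
    ((z + w) / (1 + conj w * z) + -w) /
      (1 + conj (-w) * ((z + w) / (1 + conj w * z))) = z := by
  have h1 := mob_denom_ne hz hw
  have h2 : 1 + conj (-w) * ((z + w) / (1 + conj w * z)) ≠ 0 :=
    mob_denom_ne (mob_norm_lt hz hw) (by simpa using hw)
  have h2' := h2
  rw [map_neg] at h2' ⊢
  field_simp at h2' ⊢
  rw [div_eq_iff (div_ne_zero_iff.mp h2').1]
  ring

noncomputable def mobMap {S : Type*} [TopologicalSpace S] [CompactSpace S]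
    (a : C(S, ℂ)) (ha : ‖a‖ < 1) (f : {f : C(S, ℂ) // ‖f‖ < 1}) :
    {f : C(S, ℂ) // ‖f‖ < 1} := by
  refine ⟨⟨fun s => ((f : C(S, ℂ)) s + a s) / (1 + conj (a s) * (f : C(S, ℂ)) s), ?_⟩, ?_⟩
  · apply Continuous.div
    · fun_prop
    · exact continuous_const.add ((Complex.continuous_conj.comp a.continuous).mul
        (f : C(S, ℂ)).continuous)
    · intro s
      exact mob_denom_ne (lt_of_le_of_lt ((f : C(S, ℂ)).norm_coe_le_norm s) f.2)
        (lt_of_le_of_lt (a.norm_coe_le_norm s) ha)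
  · rw [ContinuousMap.norm_lt_iff _ one_pos]
    intro s
    exact mob_norm_lt (lt_of_le_of_lt ((f : C(S, ℂ)).norm_coe_le_norm s) f.2)
      (lt_of_le_of_lt (a.norm_coe_le_norm s) ha)

lemma mobMap_apply {S : Type*} [TopologicalSpace S] [CompactSpace S]
    (a : C(S, ℂ)) (ha : ‖a‖ < 1) (f : {f : C(S, ℂ) // ‖f‖ < 1}) (s : S) :
    (mobMap a ha f : C(S, ℂ)) s
      = ((f : C(S, ℂ)) s + a s) / (1 + conj (a s) * (f : C(S, ℂ)) s) := rfl


/-- Let `S` be a compact space and `B` the open unit ball of `C(S, ℂ)` with the sup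
norm.  For each `a ∈ B` the map `φ_a(f) = (f + a)/(1 + conj(a) f)` (pointwise
operations, the denominator being nowhere zero) is a well-defined bijection of `B` onto
itself with inverse `φ_{-a}`. -/
theorem stmt12 {S : Type*} [TopologicalSpace S] [CompactSpace S]
    (a : C(S, ℂ)) (ha : ‖a‖ < 1) :
    (∀ f : C(S, ℂ), ‖f‖ < 1 → ∀ s : S, 1 + conj (a s) * f s ≠ 0) ∧
    ∃ φ ψ : {f : C(S, ℂ) // ‖f‖ < 1} → {f : C(S, ℂ) // ‖f‖ < 1},
      (∀ f s, (φ f : C(S, ℂ)) s =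
          ((f : C(S, ℂ)) s + a s) / (1 + conj (a s) * (f : C(S, ℂ)) s)) ∧
      (∀ f s, (ψ f : C(S, ℂ)) s =
          ((f : C(S, ℂ)) s - a s) / (1 + conj (-a s) * (f : C(S, ℂ)) s)) ∧
      Function.LeftInverse ψ φ ∧ Function.RightInverse ψ φ := by
  have ha' : ‖-a‖ < 1 := by rwa [norm_neg]
  have hpt : ∀ (b : C(S, ℂ)), ‖b‖ < 1 → ∀ (f : {f : C(S, ℂ) // ‖f‖ < 1}) (s : S),
      ‖(f : C(S, ℂ)) s‖ < 1 ∧ ‖b s‖ < 1 := fun b hb f s =>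
    ⟨lt_of_le_of_lt ((f : C(S, ℂ)).norm_coe_le_norm s) f.2,
     lt_of_le_of_lt (b.norm_coe_le_norm s) hb⟩
  refine ⟨fun f hf s => mob_denom_ne (lt_of_le_of_lt (f.norm_coe_le_norm s) hf)
      (lt_of_le_of_lt (a.norm_coe_le_norm s) ha),
    mobMap a ha, mobMap (-a) ha', fun f s => rfl, ?_, ?_, ?_⟩
  · intro f s
    show ((f : C(S, ℂ)) s + (-a) s) / (1 + conj ((-a) s) * (f : C(S, ℂ)) s) = _
    simp [sub_eq_add_neg]
  · intro f
    ext s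
    obtain ⟨hz, hw⟩ := hpt a ha f s
    show ((mobMap a ha f : C(S, ℂ)) s + (-a) s) /
        (1 + conj ((-a) s) * (mobMap a ha f : C(S, ℂ)) s) = (f : C(S, ℂ)) s
    rw [mobMap_apply]
    simpa using mob_inv hz hw
  · intro f
    ext s
    obtain ⟨hz, hw⟩ := hpt (-a) ha' f s
    show ((mobMap (-a) ha' f : C(S, ℂ)) s + a s) /
        (1 + conj (a s) * (mobMap (-a) ha' f : C(S, ℂ)) s) = (f : C(S, ℂ)) s
    rw [mobMap_apply]
    have := mob_inv hz hw
    simp only [ContinuousMap.neg_apply, neg_neg] at this ⊢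
    simpa using this
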